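/- For real numbers b ∈ [0,1), d ∈ (0,∞) and integer k ≥ 2, the sum ∑_{j=1}^{k} (1/2 / (1/2 + k - j)) · j^{-(b+d)} (i.e., ∑_{j=1}^k (φ_{k-j}^{1/2})^2 j^{-(b+d)}) is at most 2^b [(1-b)^{-1} + 2^{d+1}(ed)^{-1}] · (k+1)^{-b}. -/

import Mathlib

lemma aux_sum_rpow (b : ℝ) (hb0 : 0 ≤ b) (hb1 : b < 1) (m : ℕ) :
    ∑ j ∈ Finset.Icc 1 m, (j : ℝ) ^ (-b) ≤ (m : ℝ) ^ (1 - b) / (1 - b) := by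
  have hp0 : (0:ℝ) < 1 - b := by linarith
  induction m with
  | zero => simp [Real.zero_rpow hp0.ne']
  | succ m ih =>
    rw [Finset.sum_Icc_succ_top (Nat.one_le_iff_ne_zero.mpr (Nat.succ_ne_zero m))]
    have hy : (0:ℝ) < (m:ℝ) + 1 := by positivity
    have hu0 : (0:ℝ) ≤ 1 + -(1/((m:ℝ)+1)) := by
      have : 1/((m:ℝ)+1) ≤ 1 := by rw [div_le_one hy]; linarith
      linarith
    have key : ((m:ℝ)) ^ (1 - b) ≤ ((m:ℝ)+1) ^ (1-b) - (1-b) * ((m:ℝ)+1) ^ (-b) := by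
      have h1 : (m:ℝ) = ((m:ℝ)+1) * (1 + -(1/((m:ℝ)+1))) := by field_simp; ring
      have hs : (-1:ℝ) ≤ -(1/((m:ℝ)+1)) := by linarith [hu0]
      have h2 : (1 + -(1/((m:ℝ)+1))) ^ (1-b) ≤ 1 + (1-b) * -(1/((m:ℝ)+1)) :=
        rpow_one_add_le_one_add_mul_self hs hp0.le (by linarith)
      have h3 : ((m:ℝ)) ^ (1-b) = ((m:ℝ)+1) ^ (1-b) * (1 + -(1/((m:ℝ)+1))) ^ (1-b) := by
        conv_lhs => rw [h1]
        rw [Real.mul_rpow hy.le hu0]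
      have h4 : ((m:ℝ)+1) ^ (1-b) * (1 + (1-b) * -(1/((m:ℝ)+1)))
          = ((m:ℝ)+1)^(1-b) - (1-b) * ((m:ℝ)+1)^(-b) := by
        have h4' : ((m:ℝ)+1) ^ (-b) = ((m:ℝ)+1) ^ (1-b) / ((m:ℝ)+1) := by
          rw [show (-b) = (1-b) - 1 by ring, Real.rpow_sub_one hy.ne']
        rw [h4']; field_simp; ring
      calc ((m:ℝ)) ^ (1-b) = ((m:ℝ)+1) ^ (1-b) * (1 + -(1/((m:ℝ)+1))) ^ (1-b) := h3
        _ ≤ ((m:ℝ)+1) ^ (1-b) * (1 + (1-b) * -(1/((m:ℝ)+1))) :=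
            mul_le_mul_of_nonneg_left h2 (Real.rpow_nonneg hy.le _)
        _ = _ := h4
    have h6 : ((m:ℝ))^(1-b)/(1-b) ≤ (((m:ℝ)+1)^(1-b) - (1-b)*((m:ℝ)+1)^(-b))/(1-b) :=
      (div_le_div_iff_of_pos_right hp0).mpr key
    have h7 : (((m:ℝ)+1)^(1-b) - (1-b)*((m:ℝ)+1)^(-b))/(1-b)
        = ((m:ℝ)+1)^(1-b)/(1-b) - ((m:ℝ)+1)^(-b) := by field_simp
    push_cast
    linarith [ih]

lemma aux_reflect (k : ℕ) :
    ∑ j ∈ Finset.Icc 1 k, (1:ℝ)/(1 + (k:ℝ) - (j:ℝ)) = ∑ i ∈ Finset.Icc 1 k, ((i:ℝ))⁻¹ := by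
  refine Finset.sum_nbij' (fun j => k + 1 - j) (fun i => k + 1 - i) ?_ ?_ ?_ ?_ ?_
  · intro a ha; simp only [Finset.mem_Icc] at *; omega
  · intro a ha; simp only [Finset.mem_Icc] at *; omega
  · intro a ha; simp only [Finset.mem_Icc] at *; omega
  · intro a ha; simp only [Finset.mem_Icc] at *; omega
  · intro a ha
    simp only [Finset.mem_Icc] at ha
    have : ((k + 1 - a : ℕ) : ℝ) = (k:ℝ) + 1 - (a:ℝ) := by
      push_cast [Nat.cast_sub (by omega : a ≤ k + 1)]; ring
    rw [this, one_div]
    ring_nf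

lemma aux_log (d : ℝ) (hd : 0 < d) (x : ℝ) (hx : 1 ≤ x) :
    Real.exp 1 * d * Real.log x ≤ x ^ d := by
  have hx0 : 0 < x := by linarith
  have ht : x ^ d = Real.exp (Real.log x * d) := Real.rpow_def_of_pos hx0 d
  set t := Real.log x * d with htdef
  have h1 : t - 1 + 1 ≤ Real.exp (t - 1) := Real.add_one_le_exp _
  have h2 : Real.exp (t - 1) = Real.exp t / Real.exp 1 := by
    rw [Real.exp_sub]
  have h3 : Real.exp 1 * t ≤ Real.exp t := by
    rw [h2] at h1
    have := Real.exp_pos 1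
    calc Real.exp 1 * t = (t - 1 + 1) * Real.exp 1 := by ring
      _ ≤ (Real.exp t / Real.exp 1) * Real.exp 1 := by
          exact mul_le_mul_of_nonneg_right h1 this.le
      _ = Real.exp t := by field_simp
  rw [ht]
  calc Real.exp 1 * d * Real.log x = Real.exp 1 * t := by rw [htdef]; ring
    _ ≤ Real.exp (Real.log x * d) := h3

set_option maxHeartbeats 1000000 in
theorem stmt_2 (b d : ℝ) (hb0 : 0 ≤ b) (hb1 : b < 1) (hd : 0 < d)
    (k : ℕ) (hk : 2 ≤ k) :
    ∑ j ∈ Finset.Icc 1 k,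
        ((1 / 2) / (1 / 2 + (k : ℝ) - (j : ℝ))) * (j : ℝ) ^ (-(b + d))
      ≤ (2 : ℝ) ^ b * ((1 - b)⁻¹ + 2 ^ (d + 1) * (Real.exp 1 * d)⁻¹) *
        ((k : ℝ) + 1) ^ (-b) := by
  have hp0 : (0:ℝ) < 1 - b := by linarith
  set m := (k+1)/2 with hmdef
  have hm1 : 1 ≤ m := by omega
  have hmk : m ≤ k := by omega
  have h2m : 2 * m ≤ k + 1 := by omega
  have h2m' : k + 1 ≤ 2 * (m + 1) := by omega
  have hkr : (2:ℝ) ≤ (k:ℝ) := by exact_mod_cast hk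
  have hk0 : (0:ℝ) < (k:ℝ) := by linarith
  have hk1 : (0:ℝ) < (k:ℝ) + 1 := by linarith
  have hhalf : (0:ℝ) < ((k:ℝ)+1)/2 := by linarith
  set f : ℕ → ℝ := fun j => ((1 / 2) / (1 / 2 + (k : ℝ) - (j : ℝ))) * (j : ℝ) ^ (-(b + d))
    with hfdef
  -- part 1 bound
  have hS1 : ∑ j ∈ Finset.Ioc 0 m, f j ≤ 2^b * (1-b)⁻¹ * ((k:ℝ)+1)^(-b) := by
    have step : ∀ j ∈ Finset.Ioc 0 m, f j ≤ (1/(k:ℝ)) * (j:ℝ)^(-b) := by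
      intro j hj
      simp only [Finset.mem_Ioc] at hj
      have hjr : (1:ℝ) ≤ (j:ℝ) := by exact_mod_cast hj.1
      have hjm : (j:ℝ) ≤ ((k:ℝ)+1)/2 := by
        have : 2*j ≤ k+1 := by omega
        have : (2:ℝ)*(j:ℝ) ≤ (k:ℝ)+1 := by exact_mod_cast this
        linarith
      have hden : (k:ℝ)/2 ≤ 1/2 + (k:ℝ) - (j:ℝ) := by linarith
      have hcoef : (1/2)/(1/2+(k:ℝ)-(j:ℝ)) ≤ 1/(k:ℝ) := by
        rw [div_le_div_iff₀ (by linarith) hk0]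
        linarith
      have hpow : (j:ℝ)^(-(b+d)) ≤ (j:ℝ)^(-b) :=
        Real.rpow_le_rpow_of_exponent_le hjr (by linarith)
      exact mul_le_mul hcoef hpow (Real.rpow_nonneg (by linarith) _) (by positivity)
    have hIoc : Finset.Ioc 0 m = Finset.Icc 1 m := (Finset.Icc_add_one_left_eq_Ioc 0 m).symm
    have hm2 : ((m:ℕ):ℝ) ≤ ((k:ℝ)+1)/2 := by
      have : (2:ℝ)*(m:ℝ) ≤ (k:ℝ)+1 := by exact_mod_cast h2m
      linarith
    have e1 : (((k:ℝ)+1)/2)^(1-b) = (((k:ℝ)+1)/2) * ((((k:ℝ)+1)/2)^(-b)) := by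
      rw [show (1-b) = 1 + (-b) by ring, Real.rpow_add hhalf, Real.rpow_one]
    have e2 : (((k:ℝ)+1)/2)^(-b) = 2^b * ((k:ℝ)+1)^(-b) := by
      rw [Real.div_rpow (by linarith) (by norm_num), Real.rpow_neg (by norm_num : (0:ℝ) ≤ 2),
        div_eq_mul_inv, inv_inv, mul_comm]
    calc ∑ j ∈ Finset.Ioc 0 m, f j ≤ ∑ j ∈ Finset.Ioc 0 m, (1/(k:ℝ)) * (j:ℝ)^(-b) :=
          Finset.sum_le_sum step
      _ = (1/(k:ℝ)) * ∑ j ∈ Finset.Icc 1 m, (j:ℝ)^(-b) := by rw [hIoc, Finset.mul_sum]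
      _ ≤ (1/(k:ℝ)) * ((m:ℝ)^(1-b)/(1-b)) := by
          have := aux_sum_rpow b hb0 hb1 m
          have h1k : (0:ℝ) ≤ 1/(k:ℝ) := by positivity
          exact mul_le_mul_of_nonneg_left this h1k
      _ ≤ (2/((k:ℝ)+1)) * ((((k:ℝ)+1)/2)^(1-b)/(1-b)) := by
          have h1k : 1/(k:ℝ) ≤ 2/((k:ℝ)+1) := by
            rw [div_le_div_iff₀ hk0 hk1]; linarith
          have hmm : (m:ℝ)^(1-b) ≤ (((k:ℝ)+1)/2)^(1-b) :=
            Real.rpow_le_rpow (Nat.cast_nonneg m) hm2 (by linarith)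
          apply mul_le_mul h1k _ (by positivity) (by positivity)
          exact div_le_div_of_nonneg_right hmm hp0.le
      _ = 2^b * (1-b)⁻¹ * ((k:ℝ)+1)^(-b) := by
          rw [e1, e2]; field_simp
  -- part 2 bound
  have hS2 : ∑ j ∈ Finset.Ioc m k, f j
      ≤ 2^b * (2^(d+1) * (Real.exp 1 * d)⁻¹) * ((k:ℝ)+1)^(-b) := by
    set C : ℝ := (((k:ℝ)+1)/2)^(-(b+d)) with hCdef
    have hC0 : 0 ≤ C := Real.rpow_nonneg hhalf.le _
    have step : ∀ j ∈ Finset.Ioc m k, f j ≤ ((1:ℝ)/(1 + (k:ℝ) - (j:ℝ))) * C := by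
      intro j hj
      simp only [Finset.mem_Ioc] at hj
      have hjk : (j:ℝ) ≤ (k:ℝ) := by exact_mod_cast hj.2
      have hjge : ((k:ℝ)+1)/2 ≤ (j:ℝ) := by
        have : k + 1 ≤ 2*j := by omega
        have : (k:ℝ)+1 ≤ 2*(j:ℝ) := by exact_mod_cast this
        linarith
      have hcoef : (1/2)/(1/2+(k:ℝ)-(j:ℝ)) ≤ 1/(1+(k:ℝ)-(j:ℝ)) := by
        rw [div_le_div_iff₀ (by linarith) (by linarith)]
        linarith
      have hpow : (j:ℝ)^(-(b+d)) ≤ C :=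
        Real.rpow_le_rpow_of_nonpos hhalf hjge (by linarith)
      exact mul_le_mul hcoef hpow (Real.rpow_nonneg (by linarith [hjge]) _)
        (div_nonneg (by norm_num) (by linarith))
    have hsub : Finset.Ioc m k ⊆ Finset.Ioc 0 k := Finset.Ioc_subset_Ioc (Nat.zero_le m) le_rfl
    have hext : ∑ j ∈ Finset.Ioc m k, ((1:ℝ)/(1 + (k:ℝ) - (j:ℝ))) * C
        ≤ ∑ j ∈ Finset.Ioc 0 k, ((1:ℝ)/(1 + (k:ℝ) - (j:ℝ))) * C := by
      apply Finset.sum_le_sum_of_subset_of_nonneg hsub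
      intro j hj _
      simp only [Finset.mem_Ioc] at hj
      have hjk : (j:ℝ) ≤ (k:ℝ) := by exact_mod_cast hj.2
      have hpos : (0:ℝ) < 1 + (k:ℝ) - (j:ℝ) := by linarith
      exact mul_nonneg (div_nonneg zero_le_one hpos.le) hC0
    have hIoc : Finset.Ioc 0 k = Finset.Icc 1 k := (Finset.Icc_add_one_left_eq_Ioc 0 k).symm
    have hharm : ∑ j ∈ Finset.Icc 1 k, ((1:ℝ)/(1 + (k:ℝ) - (j:ℝ))) = ((harmonic k : ℚ) : ℝ) := by
      rw [aux_reflect k, harmonic_eq_sum_Icc]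
      push_cast
      rfl
    have hl1 : 1 ≤ Real.log ((k:ℝ)+1) := by
      rw [Real.le_log_iff_exp_le (by linarith)]
      calc Real.exp 1 ≤ 2.7182818286 := Real.exp_one_lt_d9.le
        _ ≤ (k:ℝ)+1 := by linarith
    have hl2 : Real.log (k:ℝ) ≤ Real.log ((k:ℝ)+1) := Real.log_le_log (by linarith) (by linarith)
    have hharm2 : ((harmonic k : ℚ) : ℝ) ≤ 2 * Real.log ((k:ℝ)+1) := by
      have := harmonic_le_one_add_log k
      linarith
    have hlog : 2 * Real.log ((k:ℝ)+1) ≤ 2 * (((k:ℝ)+1)^d / (Real.exp 1 * d)) := by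
      have h := aux_log d hd ((k:ℝ)+1) (by linarith)
      have hed : (0:ℝ) < Real.exp 1 * d := by positivity
      have : Real.log ((k:ℝ)+1) ≤ ((k:ℝ)+1)^d / (Real.exp 1 * d) := by
        rw [le_div_iff₀ hed]; linarith
      linarith
    have eC : C = 2^(b+d) * ((k:ℝ)+1)^(-(b+d)) := by
      rw [hCdef, Real.div_rpow (by linarith) (by norm_num),
        Real.rpow_neg (by norm_num : (0:ℝ) ≤ 2), div_eq_mul_inv, inv_inv, mul_comm]
    calc ∑ j ∈ Finset.Ioc m k, f j ≤ ∑ j ∈ Finset.Ioc m k, ((1:ℝ)/(1 + (k:ℝ) - (j:ℝ))) * C :=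
          Finset.sum_le_sum step
      _ ≤ ∑ j ∈ Finset.Ioc 0 k, ((1:ℝ)/(1 + (k:ℝ) - (j:ℝ))) * C := hext
      _ = (∑ j ∈ Finset.Icc 1 k, ((1:ℝ)/(1 + (k:ℝ) - (j:ℝ)))) * C := by
          rw [hIoc, Finset.sum_mul]
      _ = ((harmonic k : ℚ) : ℝ) * C := by rw [hharm]
      _ ≤ (2 * (((k:ℝ)+1)^d / (Real.exp 1 * d))) * C := by
          apply mul_le_mul_of_nonneg_right _ hC0
          linarith
      _ = 2^b * (2^(d+1) * (Real.exp 1 * d)⁻¹) * ((k:ℝ)+1)^(-b) := by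
          have ed1 : (2:ℝ)^(b+d) = 2^b * 2^d := Real.rpow_add (by norm_num) b d
          have ed2 : (2:ℝ)^(d+1) = 2^d * 2 := by
            rw [Real.rpow_add (by norm_num) d 1, Real.rpow_one]
          have ed3 : ((k:ℝ)+1)^(-(b+d)) = (((k:ℝ)+1)^b * ((k:ℝ)+1)^d)⁻¹ := by
            rw [Real.rpow_neg hk1.le, Real.rpow_add hk1]
          have ed5 : ((k:ℝ)+1)^(-b) = (((k:ℝ)+1)^b)⁻¹ := Real.rpow_neg hk1.le b
          have p1 : (0:ℝ) < ((k:ℝ)+1)^b := Real.rpow_pos_of_pos hk1 b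
          have p2 : (0:ℝ) < ((k:ℝ)+1)^d := Real.rpow_pos_of_pos hk1 d
          have p3 : (0:ℝ) < Real.exp 1 * d := by positivity
          rw [eC, ed1, ed2, ed3, ed5]
          field_simp
  -- combine
  have hIcc : Finset.Icc 1 k = Finset.Ioc 0 k := Finset.Icc_add_one_left_eq_Ioc 0 k
  have hsum : ∑ j ∈ Finset.Ioc 0 m, f j + ∑ j ∈ Finset.Ioc m k, f j
      = ∑ j ∈ Finset.Ioc 0 k, f j := Finset.sum_Ioc_consecutive f (Nat.zero_le m) hmk
  calc ∑ j ∈ Finset.Icc 1 k, f j = ∑ j ∈ Finset.Ioc 0 m, f j + ∑ j ∈ Finset.Ioc m k, f j := by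
        rw [hIcc, ← hsum]
    _ ≤ 2^b * (1-b)⁻¹ * ((k:ℝ)+1)^(-b) + 2^b * (2^(d+1) * (Real.exp 1 * d)⁻¹) * ((k:ℝ)+1)^(-b) :=
        add_le_add hS1 hS2
    _ = (2 : ℝ) ^ b * ((1 - b)⁻¹ + 2 ^ (d + 1) * (Real.exp 1 * d)⁻¹) * ((k : ℝ) + 1) ^ (-b) := by
        ring
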